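/- arXiv:1911.08920 — 2 statements merged into one kernel-verified Lean document; each statement's English description precedes it below -/
import Mathlib

section
/- Let ω : (0,∞) → ℝ be continuous and suppose r·ω(r) → A as r → ∞ for some constant A (i.e., ω is asymptotically equal to A/r). Then every differentiable solution v of the fundamental relation v'(r) = 2ω(r) − v(r)/r on (0,∞) satisfies v(r) → 2A as r → ∞. (Forward direction of the paper's Theorem: equatorial orbits have tangential velocity asymptotically equal to the constant Q = 2A.) -/
open Filter

/-- If `f' = g` on `[1, ∞)` and `g → L`, then `f r / r → L`. -/
lemma div_tendsto_of_deriv_tendsto (f g : ℝ → ℝ) (L : ℝ)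
    (hf : ∀ r : ℝ, 1 ≤ r → HasDerivAt f (g r) r)
    (hg : Tendsto g atTop (nhds L)) :
    Tendsto (fun r => f r / r) atTop (nhds L) := by
  rw [Metric.tendsto_atTop] at hg ⊢
  intro ε hε
  obtain ⟨R₀, hR₀⟩ := hg (ε / 2) (by linarith)
  set R : ℝ := max R₀ 1 with hRdef
  have hR1 : (1 : ℝ) ≤ R := le_max_right _ _
  -- h s = f s - L * s has derivative g s - L, bounded by ε/2 on [R, ∞)
  set h : ℝ → ℝ := fun s => f s - L * s with hh
  have hder : ∀ x ∈ Set.Ici R, HasDerivWithinAt h (g x - L) (Set.Ici R) x := by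
    intro x hx
    exact (((hf x (le_trans hR1 hx)).sub ((hasDerivAt_id x).const_mul L)).hasDerivWithinAt).congr_deriv (by ring)
  have hbound : ∀ x ∈ Set.Ici R, ‖g x - L‖ ≤ ε / 2 := by
    intro x hx
    have := hR₀ x (le_trans (le_max_left _ _) hx)
    rw [Real.dist_eq] at this
    rw [Real.norm_eq_abs]
    linarith [this]
  have key : ∀ r : ℝ, R ≤ r → |h r - h R| ≤ ε / 2 * (r - R) := by
    intro r hr
    have := Convex.norm_image_sub_le_of_norm_hasDerivWithin_le hder hbound
      (convex_Ici R) (Set.self_mem_Ici) hr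
    rw [Real.norm_eq_abs, Real.norm_eq_abs] at this
    calc |h r - h R| ≤ ε / 2 * |r - R| := this
      _ = ε / 2 * (r - R) := by rw [abs_of_nonneg (by linarith)]
  -- choose N large
  set N : ℝ := max R (2 * |h R| / ε + 1) with hN
  refine ⟨max N 1, fun r hr => ?_⟩
  have hrN : N ≤ r := le_trans (le_max_left _ _) hr
  have hrR : R ≤ r := le_trans (le_max_left _ _) hrN
  have hr1 : (1 : ℝ) ≤ r := le_trans (le_max_right _ _) hr
  have hrpos : (0 : ℝ) < r := by linarith
  have h1 : |h r| ≤ |h R| + ε / 2 * r := by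
    have := key r hrR
    have habs : |h r| - |h R| ≤ |h r - h R| := abs_sub_abs_le_abs_sub _ _
    have hRpos : (0 : ℝ) ≤ R := by linarith
    nlinarith [abs_nonneg (h R)]
  have h2 : |h R| / r < ε / 2 := by
    rw [div_lt_iff₀ hrpos]
    have : 2 * |h R| / ε + 1 ≤ r := le_trans (le_max_right _ _) hrN
    rw [div_add' _ _ _ (ne_of_gt hε), div_le_iff₀ hε] at this
    nlinarith
  rw [Real.dist_eq]
  have : f r / r - L = h r / r := by field_simp [hh]; ring
  rw [this, abs_div, abs_of_pos hrpos]
  calc |h r| / r ≤ (|h R| + ε / 2 * r) / r := by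
        gcongr
      _ = |h R| / r + ε / 2 := by rw [add_div]; congr 1; field_simp
      _ < ε / 2 + ε / 2 := by linarith
      _ = ε := by ring

/-- If `r ω(r) → A` as `r → ∞`, then every differentiable solution of the
fundamental relation `v' = 2ω - v/r` satisfies `v(r) → 2A` as `r → ∞`. -/
theorem tangential_velocity_tendsto_two_A
    (ω : ℝ → ℝ) (hω : ContinuousOn ω (Set.Ioi 0)) (A : ℝ)
    (hA : Filter.Tendsto (fun r : ℝ => r * ω r) Filter.atTop (nhds A))
    (v : ℝ → ℝ)
    (hv : ∀ r > (0 : ℝ), HasDerivAt v (2 * ω r - v r / r) r) :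
    Filter.Tendsto v Filter.atTop (nhds (2 * A)) := by
  set f : ℝ → ℝ := fun r => r * v r with hf
  have hfder : ∀ r : ℝ, 1 ≤ r → HasDerivAt f (2 * (r * ω r)) r := by
    intro r hr
    have hr0 : r ≠ 0 := by positivity
    have : HasDerivAt (fun y => y * v y) (1 * v r + r * (2 * ω r - v r / r)) r :=
      (hasDerivAt_id r).mul (hv r (by linarith))
    convert this using 1
    field_simp
    ring
  have hg : Tendsto (fun r : ℝ => 2 * (r * ω r)) atTop (nhds (2 * A)) :=
    hA.const_mul 2
  have := div_tendsto_of_deriv_tendsto f _ (2 * A) hfder hg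
  refine this.congr' ?_
  filter_upwards [eventually_gt_atTop 0] with r hr
  field_simp [hf]
  rfl
end

section
/- Let ω : (0,∞) → ℝ be continuous and suppose the limit L = lim_{r→∞} r·ω(r) exists. If some differentiable solution v of the fundamental relation v'(r) = 2ω(r) − v(r)/r on (0,∞) satisfies v(r) → Q as r → ∞, then Q = 2L. (Converse direction of the paper's Theorem, under the assumption that r·ω(r) converges.) -/
/-- If `r ω(r) → L` as `r → ∞` and some solution of the fundamental relation
has `v(r) → Q` as `r → ∞`, then `Q = 2L`. -/
theorem asymptotic_velocity_determines_drag
    (ω : ℝ → ℝ) (hω : ContinuousOn ω (Set.Ioi 0)) (L : ℝ)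
    (hL : Filter.Tendsto (fun r : ℝ => r * ω r) Filter.atTop (nhds L))
    (v : ℝ → ℝ)
    (hv : ∀ r > (0 : ℝ), HasDerivAt v (2 * ω r - v r / r) r)
    (Q : ℝ) (hQ : Filter.Tendsto v Filter.atTop (nhds Q)) :
    Q = 2 * L := by
  set F : ℝ → ℝ := fun x => x * v x with hF
  have hF' : ∀ x > (0 : ℝ), HasDerivAt F (2 * (x * ω x)) x := by
    intro x hx
    have h := (hasDerivAt_id x).mul (hv x hx)
    have hxne : x ≠ 0 := ne_of_gt hx
    refine h.congr_deriv ?_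
    rw [id_eq, mul_sub, show x * (v x / x) = v x by field_simp]
    ring
  have key : ∀ r ≥ (1 : ℝ), ∃ c ∈ Set.Ioo r (2 * r),
      2 * (c * ω c) = (F (2 * r) - F r) / (2 * r - r) := by
    intro r hr
    have hr0 : (0 : ℝ) < r := lt_of_lt_of_le one_pos hr
    have h2r : r < 2 * r := by linarith
    have hsub : Set.Icc r (2 * r) ⊆ Set.Ioi 0 := fun x hx => lt_of_lt_of_le hr0 hx.1
    have hcont : ContinuousOn F (Set.Icc r (2 * r)) := fun x hx =>
      ((hF' x (hsub hx)).continuousAt).continuousWithinAt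
    exact exists_hasDerivAt_eq_slope F (fun x => 2 * (x * ω x)) h2r hcont
      (fun x hx => hF' x (lt_trans hr0 hx.1))
  choose! c hc1 hc2 using key
  have hcTop : Filter.Tendsto c Filter.atTop Filter.atTop := by
    apply Filter.tendsto_atTop_mono' _ _ Filter.tendsto_id
    filter_upwards [Filter.eventually_ge_atTop (1 : ℝ)] with r hr
    exact le_of_lt (hc1 r hr).1
  have hlhs : Filter.Tendsto (fun r => 2 * (c r * ω (c r))) Filter.atTop (nhds (2 * L)) :=
    ((hL.comp hcTop).const_mul 2)
  have hrhs : Filter.Tendsto (fun r => (F (2 * r) - F r) / (2 * r - r))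
      Filter.atTop (nhds Q) := by
    have h2 : Filter.Tendsto (fun r : ℝ => 2 * r) Filter.atTop Filter.atTop :=
      Filter.tendsto_id.const_mul_atTop two_pos
    have hmain : Filter.Tendsto (fun r => 2 * v (2 * r) - v r) Filter.atTop
        (nhds (2 * Q - Q)) := ((hQ.comp h2).const_mul 2).sub hQ
    have hQQ : 2 * Q - Q = Q := by ring
    rw [hQQ] at hmain
    apply hmain.congr'
    filter_upwards [Filter.eventually_ge_atTop (1 : ℝ)] with r hr
    have hr0 : r ≠ 0 := by positivity
    show 2 * v (2 * r) - v r = (2 * r * v (2 * r) - r * v r) / (2 * r - r)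
    rw [eq_div_iff (by intro h; apply hr0; linarith : 2 * r - r ≠ 0)]
    ring
  have heq : (fun r => 2 * (c r * ω (c r))) =ᶠ[Filter.atTop]
      (fun r => (F (2 * r) - F r) / (2 * r - r)) := by
    filter_upwards [Filter.eventually_ge_atTop (1 : ℝ)] with r hr
    exact hc2 r hr
  exact (tendsto_nhds_unique (hlhs.congr' heq) hrhs).symm
end
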